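/- If Γ is a nonempty collection of maximum independent sets of G, then 2α(G) ≤ |⋃Γ| + |⋂Γ|. -/

import Mathlib

open Set

variable {V : Type*}

/-- `S` is an independent set of `G`. -/
def IndepSet (G : SimpleGraph V) (S : Set V) : Prop :=
  ∀ x ∈ S, ∀ y ∈ S, ¬ G.Adj x y

/-- The independence number `α(G)`. -/
noncomputable def alpha (G : SimpleGraph V) : ℕ :=
  sSup {n | ∃ S : Set V, IndepSet G S ∧ S.ncard = n}

/-- `S` is a maximum independent set of `G`. -/
def MaxIndep (G : SimpleGraph V) (S : Set V) : Prop :=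
  IndepSet G S ∧ S.ncard = alpha G

/-- `Ω(G)`, the family of all maximum independent sets. -/
def Omega (G : SimpleGraph V) : Set (Set V) := {S | MaxIndep G S}

/-- `core(G)`, the intersection of all maximum independent sets. -/
def core (G : SimpleGraph V) : Set V := ⋂₀ Omega G

/-- `corona(G)`, the union of all maximum independent sets. -/
def corona (G : SimpleGraph V) : Set V := ⋃₀ Omega G

/-- The matching number `μ(G)`. -/
noncomputable def matchNum (G : SimpleGraph V) : ℕ :=
  sSup {n | ∃ M : G.Subgraph, M.IsMatching ∧ M.edgeSet.ncard = n}

/-- A matching from `X` into `Y`: an injection `f` on `X` into `Y` such that each `x ∈ X`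
is adjacent to `f x` and the edges `{x, f x}` are pairwise disjoint. -/
def MatchingFrom (G : SimpleGraph V) (X Y : Set V) : Prop :=
  ∃ f : V → V, Set.InjOn f X ∧ (∀ x ∈ X, f x ∈ Y ∧ G.Adj x (f x)) ∧
    ∀ x ∈ X, ∀ y ∈ X, x ≠ y → f x ≠ y

lemma indep_ncard_le_alpha [Fintype V] (G : SimpleGraph V) {T : Set V}
    (h : IndepSet G T) : T.ncard ≤ alpha G := by
  apply le_csSup
  · refine ⟨Nat.card V, ?_⟩
    rintro n ⟨S, -, rfl⟩
    calc S.ncard ≤ (Set.univ : Set V).ncard := Set.ncard_le_ncard (Set.subset_univ S) Set.finite_univ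
      _ = Nat.card V := Set.ncard_univ V
  · exact ⟨T, h, rfl⟩

lemma key_ineq [Fintype V] (G : SimpleGraph V) {S A U : Set V}
    (hS : MaxIndep G S) (hA : IndepSet G A)
    (hU : ∀ x ∈ A, ∀ y, G.Adj x y → y ∉ U) :
    (A \ S).ncard ≤ (S \ U).ncard := by
  set N : Set V := {y ∈ S | ∃ x ∈ A \ S, G.Adj x y} with hN
  have hNS : N ⊆ S := fun y hy => hy.1
  have hNSU : N ⊆ S \ U := by
    rintro y ⟨hyS, x, hx, hadj⟩
    exact ⟨hyS, hU x hx.1 y hadj⟩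
  have hTindep : IndepSet G ((S \ N) ∪ (A \ S)) := by
    rintro x (⟨hxS, hxN⟩ | hx) y (⟨hyS, hyN⟩ | hy) hadj
    · exact hS.1 x hxS y hyS hadj
    · exact hxN ⟨hxS, y, hy, hadj.symm⟩
    · exact hyN ⟨hyS, x, hx, hadj⟩
    · exact hA x hx.1 y hy.1 hadj
  have hdisj : Disjoint (S \ N) (A \ S) := by
    rw [Set.disjoint_left]
    rintro x ⟨hxS, -⟩ ⟨-, hxS'⟩
    exact hxS' hxS
  have h1 : ((S \ N) ∪ (A \ S)).ncard = (S \ N).ncard + (A \ S).ncard :=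
    Set.ncard_union_eq hdisj (Set.toFinite _) (Set.toFinite _)
  have h2 : (S \ N).ncard + N.ncard = S.ncard := by
    rw [← Set.ncard_union_eq (Set.disjoint_sdiff_left) (Set.toFinite _) (Set.toFinite _),
      Set.diff_union_of_subset hNS]
  have h3 : ((S \ N) ∪ (A \ S)).ncard ≤ S.ncard := by
    rw [hS.2]; exact indep_ncard_le_alpha G hTindep
  have h4 : N.ncard ≤ (S \ U).ncard := Set.ncard_le_ncard hNSU (Set.toFinite _)
  omega

theorem stmt_6 [Fintype V] (G : SimpleGraph V)
    (Γ : Set (Set V)) (hΓ : Γ ⊆ Omega G) (hne : Γ.Nonempty) :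
    2 * alpha G ≤ (⋃₀ Γ).ncard + (⋂₀ Γ).ncard := by
  classical
  have key : ∀ (s : Set (Set V)), s.Finite → s.Nonempty → s ⊆ Omega G →
      2 * alpha G ≤ (⋃₀ s).ncard + (⋂₀ s).ncard := by
    intro s hsfin
    refine Set.Finite.induction_on s hsfin ?_ ?_
    · rintro ⟨x, hx⟩; exact absurd hx (Set.notMem_empty x)
    · rintro a s ha hsfin IH _ hsub
      have haΩ : MaxIndep G a := hsub (Set.mem_insert a s)
      rcases s.eq_empty_or_nonempty with rfl | hne'
      · simp only [Set.sUnion_insert, Set.sInter_insert, Set.sUnion_empty, Set.sInter_empty,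
          Set.union_empty, Set.inter_univ]
        rw [haΩ.2]; omega
      · have IH' := IH hne' (fun T hT => hsub (Set.mem_insert_of_mem a hT))
        set U := ⋃₀ s with hU
        set I := ⋂₀ s with hI
        obtain ⟨T₀, hT₀⟩ := hne'
        have hIT₀ : I ⊆ T₀ := Set.sInter_subset_of_mem hT₀
        have hIindep : IndepSet G I := fun x hx y hy =>
          (hsub (Set.mem_insert_of_mem a hT₀)).1 x (hIT₀ hx) y (hIT₀ hy)
        have hUavoid : ∀ x ∈ I, ∀ y, G.Adj x y → y ∉ U := by
          rintro x hx y hadj ⟨T, hT, hyT⟩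
          exact (hsub (Set.mem_insert_of_mem a hT)).1 x (hx T hT) y hyT hadj
        have hk : (I \ a).ncard ≤ (a \ U).ncard := key_ineq G haΩ hIindep hUavoid
        rw [Set.sUnion_insert, Set.sInter_insert, ← hU, ← hI]
        have e1 : (a ∪ U).ncard = U.ncard + (a \ U).ncard := by
          rw [← Set.diff_union_self,
            Set.ncard_union_eq Set.disjoint_sdiff_left (Set.toFinite _) (Set.toFinite _),
            Nat.add_comm]
        have e2 : (a ∩ I).ncard + (I \ a).ncard = I.ncard := by
          have hd : Disjoint (a ∩ I) (I \ a) := by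
            rw [Set.disjoint_left]; rintro x ⟨hxa, -⟩ ⟨-, hxa'⟩; exact hxa' hxa
          rw [← Set.ncard_union_eq hd (Set.toFinite _) (Set.toFinite _), Set.inter_comm,
            Set.inter_union_diff]
        omega
  exact key Γ (Set.toFinite Γ) hne hΓ
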